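/- Let μ, σ, ε', γ be real numbers with σ > 0, ε' > 0, and 0 < γ < 1. Let n and Q be positive natural numbers with n ≥ 4/ε'², Q odd, and Q ≥ 8·ln(1/γ). Let (Z_{q,i}) for q ∈ {1,…,Q}, i ∈ {1,…,n} be independent identically distributed real-valued square-integrable random variables, each with mean μ and variance at most σ². For each q let Z̄_q = (1/n)·Σ_{i=1}^{n} Z_{q,i}, and let S be the median of Z̄₁, …, Z̄_Q. Then ℙ(|S − μ| ≤ ε'·σ) ≥ 1 − γ. -/

import Mathlib

open MeasureTheory ProbabilityTheory

/-- The median of a finite family of reals: the `(Q/2)`-th element (0-indexed) of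
the sorted list, i.e. for odd `Q` the `((Q+1)/2)`-th smallest value. -/
noncomputable def median {Q : ℕ} (z : Fin Q → ℝ) : ℝ :=
  ((List.ofFn z).insertionSort (· ≤ ·)).getD (Q / 2) 0

lemma countP_ofFn_eq {Q : ℕ} (z : Fin Q → ℝ) (p : ℝ → Bool) :
    (List.ofFn z).countP p = (Finset.univ.filter (fun q => p (z q) = true)).card := by
  rw [List.ofFn_eq_map, List.countP_map]
  have h0 : (Finset.univ : Finset (Fin Q)) = ⟨List.finRange Q, List.nodup_finRange Q⟩ := rfl
  rw [h0]
  simp only [Finset.filter, Finset.card, Multiset.quot_mk_to_coe, Multiset.filter_coe,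
    Multiset.coe_card]
  rw [List.countP_eq_length_filter]
  congr 1
  apply List.filter_congr
  intro x _
  simp [Function.comp]

lemma median_mem {Q : ℕ} (hQodd : Odd Q) (z : Fin Q → ℝ) (a b : ℝ)
    (h : (Finset.univ.filter (fun q => z q < a ∨ b < z q)).card ≤ Q / 2) :
    a ≤ median z ∧ median z ≤ b := by
  obtain ⟨m, hm⟩ := hQodd
  have hQ0 : 0 < Q := by omega
  set l := (List.ofFn z).insertionSort (· ≤ ·) with hl
  have hlen : l.length = Q := by simp [hl]
  have hsort : l.Pairwise (· ≤ ·) := List.pairwise_insertionSort _ _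
  have hperm : l.Perm (List.ofFn z) := List.perm_insertionSort _ _
  have hk : Q / 2 < l.length := by rw [hlen]; exact Nat.div_lt_self hQ0 one_lt_two
  have hmed : median z = l.get ⟨Q / 2, hk⟩ := by
    rw [median, ← hl, List.getD_eq_getElem l 0 hk]; rfl
  have hcount : ∀ p : ℝ → Bool, l.countP p
      = (Finset.univ.filter (fun q => p (z q) = true)).card := by
    intro p; rw [hperm.countP_eq, countP_ofFn_eq]
  constructor
  · rw [hmed]
    by_contra hlt
    push_neg at hlt
    have hq2 : Q / 2 + 1 ≤ l.countP (fun x => decide (x < a)) := by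
      have hsub : (l.take (Q / 2 + 1)).Sublist l := List.take_sublist _ _
      have htlen : (l.take (Q / 2 + 1)).length = Q / 2 + 1 := by
        rw [List.length_take]; omega
      have hall : ∀ x ∈ l.take (Q / 2 + 1), (fun x => decide (x < a)) x = true := by
        intro x hx
        obtain ⟨j, hj, hxj⟩ := List.mem_take_iff_getElem.mp hx
        simp only [decide_eq_true_eq]
        have hjlt : j < l.length := by omega
        have hle : l.get ⟨j, hjlt⟩ ≤ l.get ⟨Q / 2, hk⟩ := by
          apply hsort.rel_get_of_le
          simp only [Fin.mk_le_mk]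
          omega
        rw [← hxj]
        exact lt_of_le_of_lt hle hlt
      calc Q / 2 + 1 = (l.take (Q / 2 + 1)).countP (fun x => decide (x < a)) := by
            rw [List.countP_eq_length_filter, List.filter_eq_self.mpr hall, htlen]
        _ ≤ l.countP _ := hsub.countP_le
    rw [hcount] at hq2
    have hmono : (Finset.univ.filter (fun q => decide (z q < a) = true)).card
        ≤ (Finset.univ.filter (fun q => z q < a ∨ b < z q)).card := by
      apply Finset.card_le_card
      intro q hq
      simp only [Finset.mem_filter, decide_eq_true_eq] at hq ⊢
      exact ⟨hq.1, Or.inl hq.2⟩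
    omega
  · rw [hmed]
    by_contra hlt
    push_neg at hlt
    have hq2 : Q / 2 + 1 ≤ l.countP (fun x => decide (b < x)) := by
      have hsub : (l.drop (Q / 2)).Sublist l := List.drop_sublist _ _
      have htlen : (l.drop (Q / 2)).length = Q / 2 + 1 := by
        rw [List.length_drop, hlen]; omega
      have hall : ∀ x ∈ l.drop (Q / 2), (fun x => decide (b < x)) x = true := by
        intro x hx
        obtain ⟨j, hj, hxj⟩ := List.mem_drop_iff_getElem.mp hx
        simp only [decide_eq_true_eq]
        have hjlt : Q / 2 + j < l.length := by omega
        have hle : l.get ⟨Q / 2, hk⟩ ≤ l.get ⟨Q / 2 + j, hjlt⟩ := by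
          apply hsort.rel_get_of_le
          simp only [Fin.mk_le_mk]
          omega
        rw [← hxj]
        exact lt_of_lt_of_le hlt hle
      calc Q / 2 + 1 = (l.drop (Q / 2)).countP (fun x => decide (b < x)) := by
            rw [List.countP_eq_length_filter, List.filter_eq_self.mpr hall, htlen]
        _ ≤ l.countP _ := hsub.countP_le
    rw [hcount] at hq2
    have hmono : (Finset.univ.filter (fun q => decide (b < z q) = true)).card
        ≤ (Finset.univ.filter (fun q => z q < a ∨ b < z q)).card := by
      apply Finset.card_le_card
      intro q hq
      simp only [Finset.mem_filter, decide_eq_true_eq] at hq ⊢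
      exact ⟨hq.1, Or.inr hq.2⟩
    omega

lemma indep_row_sum {Ω : Type*} [MeasurableSpace Ω] {P : Measure Ω} {Q n : ℕ}
    (Z : Fin Q → Fin n → Ω → ℝ) (hmeas : ∀ q i, Measurable (Z q i))
    (hindep : iIndepFun
      (fun qi : Fin Q × Fin n => Z qi.1 qi.2) P)
    (φ : (Fin n → ℝ) → ℝ) (hφ : Measurable φ)
    (a : Fin Q) (s : Finset (Fin Q)) (has : a ∉ s) :
    IndepFun (fun ω => φ (fun i => Z a i ω))
      (fun ω => ∑ q ∈ s, φ (fun i => Z q i ω)) P := by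
  classical
  set S : Finset (Fin Q × Fin n) := {a} ×ˢ Finset.univ with hS
  set T : Finset (Fin Q × Fin n) := s ×ˢ Finset.univ with hT
  have hd : Disjoint S T := by
    simp only [hS, hT, Finset.disjoint_left, Finset.mem_product, Finset.mem_singleton]
    rintro ⟨q, i⟩ ⟨rfl, -⟩ ⟨hq, -⟩
    exact has hq
  have hbase := hindep.indepFun_finset S T hd (fun qi => hmeas qi.1 qi.2)
  have hmemS : ∀ i : Fin n, (a, i) ∈ S := by
    intro i; simp [hS]
  have hmemT : ∀ q ∈ s, ∀ i : Fin n, (q, i) ∈ T := by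
    intro q hq i; simp [hT, hq]
  set g : (S → ℝ) → ℝ := fun v => φ (fun i => v ⟨(a, i), hmemS i⟩) with hg
  set h : (T → ℝ) → ℝ :=
    fun v => ∑ q ∈ s.attach, φ (fun i => v ⟨(q.1, i), hmemT q.1 q.2 i⟩) with hh
  have hgm : Measurable g :=
    hφ.comp (measurable_pi_lambda _ fun i => measurable_pi_apply _)
  have hhm : Measurable h :=
    Finset.measurable_sum _ fun q _ =>
      hφ.comp (measurable_pi_lambda _ fun i => measurable_pi_apply _)
  have hcomp := hbase.comp hgm hhm
  have h1 : (g ∘ fun ω (p : S) => Z p.1.1 p.1.2 ω) = fun ω => φ (fun i => Z a i ω) := rfl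
  have h2 : (h ∘ fun ω (p : T) => Z p.1.1 p.1.2 ω)
      = fun ω => ∑ q ∈ s, φ (fun i => Z q i ω) := by
    funext ω
    simp only [Function.comp_apply, hh]
    exact Finset.sum_attach s (fun q => φ (fun i => Z q i ω))
  rwa [h1, h2] at hcomp

lemma exp_quarter_le : Real.exp (1/4) ≤ 4/3 := by
  have h4 : Real.exp (1/4) ^ 4 = Real.exp 1 := by
    rw [← Real.exp_nat_mul]; norm_num
  apply le_of_pow_le_pow_left₀ (n := 4) (by norm_num) (by norm_num)
  rw [h4]
  calc Real.exp 1 ≤ 2.7182818286 := Real.exp_one_lt_d9.le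
    _ ≤ (4/3)^4 := by norm_num

lemma exp_eighth_le : Real.exp (1/8) ≤ 2 := by
  have h8 : Real.exp (1/8) ^ 8 = Real.exp 1 := by
    rw [← Real.exp_nat_mul]; norm_num
  apply le_of_pow_le_pow_left₀ (n := 8) (by norm_num) (by norm_num)
  rw [h8]
  calc Real.exp 1 ≤ 2.7182818286 := Real.exp_one_lt_d9.le
    _ ≤ 2^8 := by norm_num

/-- Median-of-means guarantee: the median of `Q ≥ 8 ln(1/γ)` (odd) independent
averages, each of `n ≥ 4/ε'²` i.i.d. copies of a random variable with mean `μ` and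
variance at most `σ²`, lies within `ε'σ` of `μ` with probability at least `1 - γ`. -/
theorem median_of_means
    {Ω : Type*} [MeasurableSpace Ω] (P : Measure Ω) [IsProbabilityMeasure P]
    (μ σ ε' γ : ℝ) (hσ : 0 < σ) (hε' : 0 < ε') (hγ0 : 0 < γ) (hγ1 : γ < 1)
    (n Q : ℕ) (hn0 : 0 < n) (hQ0 : 0 < Q)
    (hn : (4 : ℝ) / ε' ^ 2 ≤ n) (hQodd : Odd Q) (hQ : 8 * Real.log (1 / γ) ≤ Q)
    (Z : Fin Q → Fin n → Ω → ℝ)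
    (hmeas : ∀ q i, Measurable (Z q i))
    (hL2 : ∀ q i, MemLp (Z q i) 2 P)
    (hindep : iIndepFun
      (fun qi : Fin Q × Fin n => Z qi.1 qi.2) P)
    (hident : ∀ q i q' i', IdentDistrib (Z q i) (Z q' i') P P)
    (hmean : ∀ q i, ∫ ω, Z q i ω ∂P = μ)
    (hvar : ∀ q i, variance (Z q i) P ≤ σ ^ 2) :
    ENNReal.ofReal (1 - γ)
      ≤ P {ω | |median (fun q => (1 / n : ℝ) * ∑ i, Z q i ω) - μ| ≤ ε' * σ} := by
  classical
  set c : ℝ := ε' * σ with hcdef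
  have hc : 0 < c := mul_pos hε' hσ
  set W : Fin Q → Ω → ℝ := fun q ω => (1 / n : ℝ) * ∑ i, Z q i ω with hW
  have hWmeas : ∀ q, Measurable (W q) :=
    fun q => (Finset.measurable_sum _ fun i _ => hmeas q i).const_mul _
  have hWL2 : ∀ q, MemLp (W q) 2 P := by
    intro q
    have h := (memLp_finset_sum' (μ := P) Finset.univ fun i _ => hL2 q i).const_mul (1 / n : ℝ)
    simp only [Finset.sum_apply] at h
    exact h
  have hn0' : (0 : ℝ) < n := Nat.cast_pos.mpr hn0
  have hWmean : ∀ q, ∫ ω, W q ω ∂P = μ := by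
    intro q
    simp only [hW]
    rw [integral_const_mul, integral_finset_sum _ fun i _ => (hL2 q i).integrable one_le_two]
    simp only [hmean]
    rw [Finset.sum_const, Finset.card_univ, Fintype.card_fin, nsmul_eq_mul]
    field_simp
  have hWvar : ∀ q, variance (W q) P ≤ σ ^ 2 / n := by
    intro q
    have hsum : (fun ω => ∑ i, Z q i ω) = ∑ i, Z q i := by
      funext ω; simp
    have hv : variance (fun ω => ∑ i, Z q i ω) P = ∑ i, variance (Z q i) P := by
      rw [hsum]
      exact IndepFun.variance_sum (fun i _ => hL2 q i)
        (fun i _ j _ hij => hindep.indepFun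
          (by simp [Prod.ext_iff, hij] : ((q, i) : Fin Q × Fin n) ≠ (q, j)))
    have : variance (W q) P = (1 / n : ℝ) ^ 2 * ∑ i, variance (Z q i) P := by
      rw [hW]
      simpa [hv] using variance_const_mul (1 / n : ℝ) (fun ω => ∑ i, Z q i ω) P
    rw [this]
    have hb : ∑ i, variance (Z q i) P ≤ (n : ℝ) * σ ^ 2 := by
      calc ∑ i, variance (Z q i) P ≤ ∑ _i : Fin n, σ ^ 2 :=
            Finset.sum_le_sum fun i _ => hvar q i
        _ = (n : ℝ) * σ ^ 2 := by simp [mul_comm]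
    calc (1 / n : ℝ) ^ 2 * ∑ i, variance (Z q i) P
        ≤ (1 / n : ℝ) ^ 2 * ((n : ℝ) * σ ^ 2) := by
          apply mul_le_mul_of_nonneg_left hb (by positivity)
      _ = σ ^ 2 / n := by field_simp
  -- the bad events and Chebyshev
  set A : Fin Q → Set Ω := fun q => {ω | c < |W q ω - μ|} with hA
  have hAmeas : ∀ q, MeasurableSet (A q) :=
    fun q => measurableSet_lt measurable_const ((hWmeas q).sub measurable_const).abs
  set p : Fin Q → ℝ := fun q => (P (A q)).toReal with hp
  have hp0 : ∀ q, 0 ≤ p q := fun q => ENNReal.toReal_nonneg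
  have hp14 : ∀ q, p q ≤ 1 / 4 := by
    intro q
    have hsub : A q ⊆ {ω | c ≤ |W q ω - ∫ ω', W q ω' ∂P|} := by
      intro ω hω
      rw [Set.mem_setOf_eq, hWmean q]
      exact le_of_lt hω
    have hcheb := meas_ge_le_variance_div_sq (μ := P) (hWL2 q) hc
    have hvc : variance (W q) P / c ^ 2 ≤ 1 / 4 := by
      have h1 : variance (W q) P / c ^ 2 ≤ (σ ^ 2 / n) / (ε' * σ) ^ 2 := by
        apply div_le_div_of_nonneg_right ?_ (by positivity) |>.trans_eq rfl
        · exact hWvar q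
      have h2 : (σ ^ 2 / n) / (ε' * σ) ^ 2 = 1 / (n * ε' ^ 2) := by
        field_simp
      have h3 : (1 : ℝ) / (n * ε' ^ 2) ≤ 1 / 4 := by
        apply one_div_le_one_div_of_le (by norm_num)
        have := (div_le_iff₀ (by positivity : (0:ℝ) < ε' ^ 2)).mp hn
        linarith [this]
      calc variance (W q) P / c ^ 2 ≤ (σ ^ 2 / n) / (ε' * σ) ^ 2 := h1
        _ = 1 / (n * ε' ^ 2) := h2
        _ ≤ 1 / 4 := h3
    have : P (A q) ≤ ENNReal.ofReal (1 / 4) := by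
      calc P (A q) ≤ P {ω | c ≤ |W q ω - ∫ ω', W q ω' ∂P|} := measure_mono hsub
        _ ≤ ENNReal.ofReal (variance (W q) P / c ^ 2) := hcheb
        _ ≤ ENNReal.ofReal (1 / 4) := ENNReal.ofReal_le_ofReal hvc
    calc p q ≤ (ENNReal.ofReal (1 / 4)).toReal :=
          ENNReal.toReal_mono ENNReal.ofReal_ne_top this
      _ = 1 / 4 := by rw [ENNReal.toReal_ofReal]; norm_num
  -- indicator variables
  set φ : (Fin n → ℝ) → ℝ :=
    fun v => if c < |(1 / n : ℝ) * ∑ i, v i - μ| then 1 else 0 with hφdef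
  have hφ : Measurable φ := by
    apply Measurable.ite ?_ measurable_const measurable_const
    exact measurableSet_lt measurable_const
      (((measurable_const.mul (Finset.measurable_sum _ fun i _ =>
        measurable_pi_apply i)).sub measurable_const).abs)
  set X : Fin Q → Ω → ℝ := fun q ω => φ (fun i => Z q i ω) with hX
  have hXite : ∀ q ω, X q ω = if ω ∈ A q then 1 else 0 := fun q ω => rfl
  have hXmeas : ∀ q, Measurable (X q) := by
    intro q
    have : X q = fun ω => Set.indicator (A q) (fun _ => (1:ℝ)) ω := by
      funext ω; rw [hXite]; simp [Set.indicator_apply]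
    rw [this]
    exact (measurable_const.indicator (hAmeas q))
  set t : ℝ := Real.log 3 with ht
  have ht0 : 0 ≤ t := Real.log_nonneg (by norm_num)
  have het : Real.exp t = 3 := Real.exp_log (by norm_num)
  -- mgf of single indicator
  have hmgf_q : ∀ q, mgf (X q) P t = 1 + 2 * p q := by
    intro q
    have hexp : ∀ ω, Real.exp (t * X q ω)
        = 1 + Set.indicator (A q) (fun _ => Real.exp t - 1) ω := by
      intro ω
      rw [hXite]
      by_cases hω : ω ∈ A q <;> simp [hω, Set.indicator_apply, Real.exp_zero]
    rw [mgf]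
    simp only [hexp]
    rw [integral_add (integrable_const 1)
      ((integrable_const (Real.exp t - 1)).indicator (hAmeas q))]
    rw [integral_const, integral_indicator_const _ (hAmeas q)]
    simp [measure_univ, het, hp, smul_eq_mul]
    simp only [Measure.real]
    ring
  have hmgf_q_le : ∀ q, mgf (X q) P t ≤ 3 / 2 := by
    intro q
    rw [hmgf_q q]
    linarith [hp14 q]
  -- mgf of the sum factorizes
  have hmgf_sum : ∀ s : Finset (Fin Q),
      mgf (fun ω => ∑ q ∈ s, X q ω) P t = ∏ q ∈ s, mgf (X q) P t := by
    intro s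
    induction s using Finset.induction_on with
    | empty => simp [mgf]
    | @insert a s ha ih =>
      have hknown : IndepFun (X a) (fun ω => ∑ q ∈ s, X q ω) P :=
        indep_row_sum Z hmeas hindep φ hφ a s ha
      have hadd : (fun ω => ∑ q ∈ insert a s, X q ω)
          = X a + fun ω => ∑ q ∈ s, X q ω := by
        funext ω
        simp [Finset.sum_insert ha]
      rw [hadd, hknown.mgf_add' (hXmeas a).aestronglyMeasurable
        (Finset.measurable_sum _ fun q _ => hXmeas q).aestronglyMeasurable,
        Finset.prod_insert ha, ih]
  -- Chernoff bound
  set Sm : Ω → ℝ := fun ω => ∑ q, X q ω with hSm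
  have hSmmeas : Measurable Sm := Finset.measurable_sum _ fun q _ => hXmeas q
  have hSmint : Integrable (fun ω => Real.exp (t * Sm ω)) P := by
    apply Integrable.mono' (integrable_const (Real.exp (t * Q)))
      ((hSmmeas.const_mul t).exp.aestronglyMeasurable)
    filter_upwards with ω
    rw [Real.norm_eq_abs, abs_of_pos (Real.exp_pos _)]
    apply Real.exp_le_exp.mpr
    apply mul_le_mul_of_nonneg_left ?_ ht0
    calc Sm ω ≤ ∑ _q : Fin Q, (1 : ℝ) := by
          apply Finset.sum_le_sum
          intro q _
          rw [hXite]
          split <;> norm_num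
      _ = Q := by simp
  set k : ℕ := Q / 2 with hkdef
  obtain ⟨m, hm⟩ := hQodd
  have hkm : k = m := by omega
  have hQ2 : Q = 2 * k + 1 := by omega
  have hcher := measure_ge_le_exp_mul_mgf (μ := P) (X := Sm) ((k : ℝ) + 1) ht0 hSmint
  -- numeric bound on the rhs
  have hmgfS : mgf Sm P t ≤ (3 / 2) ^ Q := by
    rw [hSm, hmgf_sum Finset.univ]
    calc ∏ q, mgf (X q) P t ≤ ∏ _q : Fin Q, (3 / 2 : ℝ) :=
          Finset.prod_le_prod (fun q _ => mgf_nonneg) (fun q _ => hmgf_q_le q)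
      _ = (3 / 2) ^ Q := by simp [div_pow]
  have hnum : Real.exp (-t * ((k : ℝ) + 1)) * mgf Sm P t ≤ γ := by
    have hexp_t : Real.exp (-t * ((k : ℝ) + 1)) = ((3 : ℝ) ^ (k + 1))⁻¹ := by
      rw [neg_mul, Real.exp_neg]
      congr 1
      have : t * ((k : ℝ) + 1) = ((k + 1 : ℕ) : ℝ) * t := by push_cast; ring
      rw [this, Real.exp_nat_mul, het]
    have hstep1 : Real.exp (-t * ((k : ℝ) + 1)) * mgf Sm P t
        ≤ ((3 : ℝ) ^ (k + 1))⁻¹ * (3 / 2) ^ Q := by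
      rw [hexp_t]
      exact mul_le_mul_of_nonneg_left hmgfS (by positivity)
    have hval0 : ∀ j : ℕ, ((3 : ℝ) ^ (j + 1))⁻¹ * (3 / 2) ^ (2 * j + 1)
        = (3 / 4) ^ j * (1 / 2) := by
      intro j
      induction j with
      | zero => norm_num
      | succ j ih =>
        calc ((3:ℝ)^(j+1+1))⁻¹ * (3/2)^(2*(j+1)+1)
            = (((3:ℝ)^(j+1))⁻¹ * (3/2)^(2*j+1)) * ((3/2)^2 / 3) := by
              rw [pow_succ, mul_inv, show 2*(j+1)+1 = (2*j+1)+2 from by ring, pow_add]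
              ring
          _ = (3/4)^j * (1/2) * ((3/2)^2/3) := by rw [ih]
          _ = (3/4)^(j+1) * (1/2) := by rw [pow_succ]; ring
    have hval : ((3 : ℝ) ^ (k + 1))⁻¹ * (3 / 2) ^ Q = (3 / 4) ^ k * (1 / 2) := by
      rw [hQ2]; exact hval0 k
    have hstep2 : ((3 : ℝ) / 4) ^ k * (1 / 2) ≤ Real.exp (-(Q : ℝ) / 8) := by
      have h34 : (3 / 4 : ℝ) ≤ Real.exp (-(1 / 4)) := by
        rw [Real.exp_neg, ← one_div]
        calc (3/4 : ℝ) = 1 / (4/3) := by norm_num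
          _ ≤ 1 / Real.exp (1/4) :=
            one_div_le_one_div_of_le (Real.exp_pos _) exp_quarter_le
      have h12 : (1 / 2 : ℝ) ≤ Real.exp (-(1 / 8)) := by
        rw [Real.exp_neg, ← one_div]
        calc (1/2 : ℝ) = 1 / 2 := by norm_num
          _ ≤ 1 / Real.exp (1/8) :=
            one_div_le_one_div_of_le (Real.exp_pos _) exp_eighth_le
      have hpk : ((3 : ℝ) / 4) ^ k ≤ Real.exp (-(1 / 4)) ^ k :=
        pow_le_pow_left₀ (by norm_num) h34 k
      have hrw : Real.exp (-(1/4)) ^ k * Real.exp (-(1/8)) = Real.exp (-(Q : ℝ) / 8) := by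
        rw [← Real.exp_nat_mul, ← Real.exp_add]
        congr 1
        rw [hQ2]
        push_cast
        ring
      calc ((3 : ℝ) / 4) ^ k * (1 / 2)
          ≤ Real.exp (-(1/4)) ^ k * Real.exp (-(1/8)) := by
            apply mul_le_mul hpk h12 (by norm_num) (by positivity)
        _ = Real.exp (-(Q : ℝ) / 8) := hrw
    have hstep3 : Real.exp (-(Q : ℝ) / 8) ≤ γ := by
      rw [← Real.exp_log hγ0]
      apply Real.exp_le_exp.mpr
      rw [Real.log_div one_ne_zero (ne_of_gt hγ0), Real.log_one] at hQ
      linarith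
    calc Real.exp (-t * ((k : ℝ) + 1)) * mgf Sm P t
        ≤ ((3 : ℝ) ^ (k + 1))⁻¹ * (3 / 2) ^ Q := hstep1
      _ = (3 / 4) ^ k * (1 / 2) := hval
      _ ≤ Real.exp (-(Q : ℝ) / 8) := hstep2
      _ ≤ γ := hstep3
  have hPB : P {ω | (k : ℝ) + 1 ≤ Sm ω} ≤ ENNReal.ofReal γ := by
    have h1 : (P {ω | (k : ℝ) + 1 ≤ Sm ω}).toReal ≤ γ := hcher.trans hnum
    rw [← ENNReal.ofReal_toReal (measure_ne_top P _)]
    exact ENNReal.ofReal_le_ofReal h1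
  -- from the complement of the bad event to the median event
  set B : Set Ω := {ω | (k : ℝ) + 1 ≤ Sm ω} with hB
  have hBmeas : MeasurableSet B := measurableSet_le measurable_const hSmmeas
  have hsub : Bᶜ ⊆ {ω | |median (fun q => (1 / n : ℝ) * ∑ i, Z q i ω) - μ| ≤ ε' * σ} := by
    intro ω hω
    simp only [hB, Set.mem_compl_iff, Set.mem_setOf_eq, not_le] at hω
    -- count of bad q's
    have hSmcount : Sm ω
        = ((Finset.univ.filter (fun q => c < |W q ω - μ|)).card : ℝ) := by
      rw [hSm]
      simp only [hXite]
      rw [Finset.sum_boole]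
      congr 1
    have hcard : (Finset.univ.filter (fun q => c < |W q ω - μ|)).card ≤ k := by
      by_contra hcon
      push_neg at hcon
      have : (k : ℝ) + 1 ≤ Sm ω := by
        rw [hSmcount]
        exact_mod_cast hcon
      linarith
    have hfilter_eq : (Finset.univ.filter
          (fun q => (fun q' => W q' ω) q < μ - c ∨ μ + c < (fun q' => W q' ω) q))
        = Finset.univ.filter (fun q => c < |W q ω - μ|) := by
      apply Finset.filter_congr
      intro q _
      constructor
      · rintro (h1 | h1)
        · rw [abs_sub_comm]
          rw [lt_abs]
          left; linarith
        · rw [lt_abs]; left; linarith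
      · intro h1
        rw [lt_abs] at h1
        rcases h1 with h1 | h1
        · right; linarith
        · left; linarith
    have hmm := median_mem ⟨m, hm⟩ (fun q => W q ω) (μ - c) (μ + c)
      (by rw [hfilter_eq]; exact le_trans hcard (le_of_eq hkdef))
    rw [Set.mem_setOf_eq]
    have : |median (fun q => W q ω) - μ| ≤ c := by
      rw [abs_le]
      constructor
      · linarith [hmm.1]
      · linarith [hmm.2]
    exact this
  -- conclude
  calc ENNReal.ofReal (1 - γ) = 1 - ENNReal.ofReal γ := by
        rw [ENNReal.ofReal_sub _ hγ0.le, ENNReal.ofReal_one]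
    _ ≤ 1 - P B := tsub_le_tsub_left hPB 1
    _ = P Bᶜ := by
        rw [measure_compl hBmeas (measure_ne_top P B), measure_univ]
    _ ≤ _ := measure_mono hsub
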